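/- Consider a commutative square of topological spaces with continuous maps f₁: Z → Y, h₁: Z → X, f₂: X → S, h₂: Y → S satisfying h₂ ∘ f₁ = f₂ ∘ h₁, such that h₁ and h₂ are r-sheeted covering maps, and such that for every x ∈ X, if z₁,…,z_r are the distinct lifts of x under h₁, then the images f₁(z₁),…,f₁(z_r) are pairwise distinct. Then for every i ≥ 0, the transfer (pushforward along h₁) composed with pullback along f₁ equals pullback along f₂ composed with transfer along h₂, as maps from the i-th singular cohomology of Y with integer coefficients to the i-th singular cohomology of X. -/

import Mathlib

open scoped BigOperators

/-- Consider a commutative square of topological spaces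
`h₂ ∘ f₁ = f₂ ∘ h₁` in which `h₁ : Z → X` and `h₂ : Y → S` are `r`-sheeted covering maps,
and such that distinct lifts under `h₁` of any point of `X` have distinct images under
`f₁`.  Then, for every `i ≥ 0`, transfer (pushforward, summing a cochain over all lifts
of a singular simplex) along `h₁` composed with pullback along `f₁` equals pullback along
`f₂` composed with transfer along `h₂`, on singular `i`-cochains with `ℤ`-coefficients
(hence on `i`-th singular cohomology).  Singular `i`-simplices in a space `W` are
continuous maps `C(Δ^i, W)` from the standard `i`-simplex, and `i`-cochains are arbitrary
`ℤ`-valued functions on them; the (finite) sums over lifts are expressed as `finsum`s. -/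
theorem stmt_1
    (X Y Z S : Type*) [TopologicalSpace X] [TopologicalSpace Y]
    [TopologicalSpace Z] [TopologicalSpace S]
    (f₁ : C(Z, Y)) (h₁ : C(Z, X)) (f₂ : C(X, S)) (h₂ : C(Y, S))
    (hcomm : ∀ z : Z, h₂ (f₁ z) = f₂ (h₁ z))
    (r : ℕ) (hr : 0 < r)
    (hcov₁ : IsCoveringMap h₁) (hcard₁ : ∀ x : X, Nat.card (h₁ ⁻¹' {x}) = r)
    (hcov₂ : IsCoveringMap h₂) (hcard₂ : ∀ s : S, Nat.card (h₂ ⁻¹' {s}) = r)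
    (hdist : ∀ z z' : Z, h₁ z = h₁ z' → z ≠ z' → f₁ z ≠ f₁ z')
    (i : ℕ)
    (φ : C(↥(stdSimplex ℝ (Fin (i + 1))), Y) → ℤ)
    (σ : C(↥(stdSimplex ℝ (Fin (i + 1))), X)) :
    ∑ᶠ σ' : {τ : C(↥(stdSimplex ℝ (Fin (i + 1))), Z) // h₁.comp τ = σ},
        φ (f₁.comp σ'.1)
      = ∑ᶠ ω' : {τ : C(↥(stdSimplex ℝ (Fin (i + 1))), Y) // h₂.comp τ = f₂.comp σ},
          φ ω'.1 := by
  classical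
  set Δ := ↥(stdSimplex ℝ (Fin (i + 1)))
  -- fiberwise map
  have hmem : ∀ x : X, ∀ z : h₁ ⁻¹' {x}, f₁ z.1 ∈ h₂ ⁻¹' {f₂ x} := by
    rintro x ⟨z, hz⟩
    simp only [Set.mem_preimage, Set.mem_singleton_iff] at hz ⊢
    rw [hcomm, hz]
  set G : ∀ x : X, h₁ ⁻¹' {x} → h₂ ⁻¹' {f₂ x} :=
    fun x z => ⟨f₁ z.1, hmem x z⟩ with hG
  have hGinj : ∀ x, Function.Injective (G x) := by
    intro x z z' h
    have : f₁ z.1 = f₁ z'.1 := congrArg Subtype.val h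
    by_contra hne
    exact hdist z.1 z'.1 (z.2.trans z'.2.symm) (fun e => hne (Subtype.ext e)) this
  have hGbij : ∀ x, Function.Bijective (G x) := by
    intro x
    have : Finite (h₂ ⁻¹' {f₂ x}) :=
      Nat.finite_of_card_ne_zero (by rw [hcard₂]; omega)
    exact (Nat.bijective_iff_injective_and_card (G x)).mpr
      ⟨hGinj x, by rw [hcard₁, hcard₂]⟩
  -- the main bijection
  set B : {τ : C(Δ, Z) // h₁.comp τ = σ} → {τ : C(Δ, Y) // h₂.comp τ = f₂.comp σ} :=
    fun τ => ⟨f₁.comp τ.1, by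
      ext t
      simp only [ContinuousMap.comp_apply]
      rw [hcomm]
      exact congrArg f₂ (ContinuousMap.congr_fun τ.2 t)⟩ with hB
  have hBinj : Function.Injective B := by
    rintro ⟨τ, hτ⟩ ⟨τ', hτ'⟩ h
    have h' : ∀ t, f₁ (τ t) = f₁ (τ' t) := fun t =>
      ContinuousMap.congr_fun (congrArg Subtype.val h) t
    refine Subtype.ext (ContinuousMap.ext fun t => ?_)
    by_contra hne
    exact hdist (τ t) (τ' t)
      ((ContinuousMap.congr_fun hτ t).trans (ContinuousMap.congr_fun hτ' t).symm)
      hne (h' t)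
  have hBsurj : Function.Surjective B := by
    rintro ⟨ω, hω⟩
    have hωt : ∀ t, h₂ (ω t) = f₂ (σ t) := fun t => ContinuousMap.congr_fun hω t
    -- pointwise lift
    set τ₀ : Δ → Z := fun t =>
      ((Equiv.ofBijective (G (σ t)) (hGbij (σ t))).symm ⟨ω t, by
        simp only [Set.mem_preimage, Set.mem_singleton_iff]; exact hωt t⟩ : h₁ ⁻¹' {σ t}).1
      with hτ₀
    have hτ₀fiber : ∀ t, h₁ (τ₀ t) = σ t := fun t =>
      ((Equiv.ofBijective (G (σ t)) (hGbij (σ t))).symm _).2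
    have hτ₀f : ∀ t, f₁ (τ₀ t) = ω t := by
      intro t
      have := (Equiv.ofBijective (G (σ t)) (hGbij (σ t))).apply_symm_apply
        ⟨ω t, by simp only [Set.mem_preimage, Set.mem_singleton_iff]; exact hωt t⟩
      exact congrArg Subtype.val this
    -- continuity of τ₀
    have hcont : Continuous τ₀ := by
      rw [continuous_iff_continuousAt]
      intro t₀
      obtain ⟨e, hz₀, he⟩ := hcov₁.isLocalHomeomorph (τ₀ t₀)
      have hh₁e : ∀ z, h₁ z = e z := fun z => congrFun he z
      have hx₀ : σ t₀ ∈ e.target := by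
        rw [← hτ₀fiber t₀, hh₁e]; exact e.map_source hz₀
      -- a convex preconnected neighborhood N of t₀ inside σ ⁻¹' e.target
      have hWopen : IsOpen (⇑σ ⁻¹' e.target) := e.open_target.preimage σ.continuous
      obtain ⟨O, hO, hOeq⟩ := isOpen_induced_iff.mp hWopen
      have ht₀O : (t₀ : Fin (i+1) → ℝ) ∈ O := by
        show t₀.1 ∈ O; rw [← Set.mem_preimage, hOeq]; exact hx₀
      obtain ⟨ε, hε, hball⟩ := Metric.isOpen_iff.mp hO _ ht₀O
      set N : Set Δ := Subtype.val ⁻¹' Metric.ball (t₀ : Fin (i+1) → ℝ) ε with hN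
      have hNnhds : N ∈ nhds t₀ :=
        (continuous_subtype_val.continuousAt).preimage_mem_nhds
          (Metric.ball_mem_nhds _ hε)
      have hNW : N ⊆ ⇑σ ⁻¹' e.target := by
        intro t ht
        rw [← hOeq]; exact hball ht
      have hNpre : IsPreconnected N := by
        rw [← Topology.IsInducing.subtypeVal.isPreconnected_image]
        rw [Subtype.image_preimage_coe]
        exact ((convex_stdSimplex ℝ (Fin (i+1))).inter (convex_ball _ _)).isPreconnected
      -- the comparison lift g
      set g : Δ → Y := fun t => f₁ (e.symm (σ t)) with hg
      have hgcont : ContinuousOn g N :=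
        f₁.continuous.comp_continuousOn
          (e.continuousOn_symm.comp σ.continuous.continuousOn hNW)
      have hEq : Set.EqOn (⇑ω) g N := by
        refine hcov₂.eqOn_of_comp_eqOn hNpre ω.continuous.continuousOn hgcont ?_
          (mem_of_mem_nhds hNnhds) ?_
        · intro t ht
          have hmem' : σ t ∈ e.target := hNW ht
          simp only [Function.comp_apply, hg]
          rw [hωt t, hcomm, hh₁e, e.right_inv hmem']
        · have : e.symm (σ t₀) = τ₀ t₀ := by
            rw [← hτ₀fiber t₀, hh₁e, e.left_inv hz₀]
          simp only [hg, this, hτ₀f t₀]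
      -- τ₀ agrees with e.symm ∘ σ on N
      have hEq2 : Set.EqOn τ₀ (fun t => e.symm (σ t)) N := by
        intro t ht
        have hmem' : σ t ∈ e.target := hNW ht
        have h1 : h₁ (e.symm (σ t)) = σ t := by rw [hh₁e, e.right_inv hmem']
        have h2 : f₁ (e.symm (σ t)) = ω t := (hEq ht).symm
        by_contra hne
        exact hdist (τ₀ t) (e.symm (σ t)) ((hτ₀fiber t).trans h1.symm) hne
          ((hτ₀f t).trans h2.symm)
      have : ContinuousAt (fun t => e.symm (σ t)) t₀ :=
        (e.symm.continuousAt (by rwa [OpenPartialHomeomorph.symm_source])).comp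
          σ.continuous.continuousAt
      exact this.congr (Filter.eventuallyEq_of_mem hNnhds hEq2).symm
    refine ⟨⟨⟨τ₀, hcont⟩, ContinuousMap.ext fun t => hτ₀fiber t⟩,
      Subtype.ext (ContinuousMap.ext fun t => hτ₀f t)⟩
  exact finsum_eq_of_bijective B ⟨hBinj, hBsurj⟩ (fun τ' => rfl)
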